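/- For points a, b, c ∈ ℝ² and direction vectors v, w ∈ ℝ², the quantity Q(a,b,c) = (c₂−b₂)[(b₂−c₂)v₁w₁ − (a₁−c₁)v₂w₁ + (a₁−b₁)v₁w₂] + (c₁−b₁)[(b₁−c₁)v₂w₂ − (a₂−c₂)v₁w₂ + (a₂−b₂)v₂w₁] equals (up to the positive factor ‖c−b‖ and normalization) the derivative at h = 0 of twice the area of the triangle a b'(h) c'(h), where b'(h) and c'(h) are the intersections of the line through b and c translated by ‖c−b‖·h·u (u the unit normal to c−b pointing away from a) with the lines b + ℝv and c + ℝw, assuming v·u ≠ 0 and w·u ≠ 0. -/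

import Mathlib

noncomputable section
open Set Real

/-- Points in the plane. -/
abbrev Pt : Type := ℝ × ℝ

/-- 2D wedge (cross) product. -/
def wedge (p q : Pt) : ℝ := p.1 * q.2 - p.2 * q.1

/-- Euclidean dot product on the plane. -/
def dotp (p q : Pt) : ℝ := p.1 * q.1 + p.2 * q.2

/-- Euclidean length in the plane. -/
def elen (p : Pt) : ℝ := Real.sqrt (p.1 ^ 2 + p.2 ^ 2)

/-- The unit normal to the segment from `b` to `c` obtained by rotating `c - b`
by `-90°` (for a counter-clockwise triangle `abc` this points away from `a`). -/
def nhat (b c : Pt) : Pt := (elen (c - b))⁻¹ • ((c.2 - b.2, b.1 - c.1) : Pt)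

/-- Twice the signed area of the triangle `a b'(h) c'(h)`, where `b'(h)` and `c'(h)`
are the intersections of the line through `b`, `c` translated by `‖c-b‖·h·u` with the
lines `b + ℝv` and `c + ℝw`. Its derivative at `h = 0` is the area derivative `Q`. -/
def slideFam (a b c v w u : Pt) : ℝ → ℝ := fun h =>
  wedge ((b + (elen (c - b) * h / dotp v u) • v) - a)
        ((c + (elen (c - b) * h / dotp w u) • w) - a)

/-- The closed-form `calculate_Q` of the paper. -/
def Qf (a b c v w : Pt) : ℝ :=
  (c.2 - b.2) * ((b.2 - c.2) * v.1 * w.1 - (a.1 - c.1) * v.2 * w.1 + (a.1 - b.1) * v.1 * w.2)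
  + (c.1 - b.1) * ((b.1 - c.1) * v.2 * w.2 - (a.2 - c.2) * v.1 * w.2 + (a.2 - b.2) * v.2 * w.1)

set_option maxHeartbeats 1000000 in
/-- the closed-form `Qf` equals, up to the positive factor
`-1/((v·u)(w·u))` (positive in the geometric configuration where `v·u > 0 > w·u`),
the derivative at `h = 0` of twice the area of `a b'(h) c'(h)`, where `u` is the unit
normal to `c - b` pointing away from `a`, assuming `v·u ≠ 0` and `w·u ≠ 0`. -/
theorem stmt_19 (a b c v w u : Pt)
    (hccw : 0 < wedge (b - a) (c - a)) (hbc : b ≠ c)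
    (hu1 : u.1 ^ 2 + u.2 ^ 2 = 1) (huperp : dotp u (c - b) = 0)
    (huaway : dotp u (a - b) < 0)
    (hv : dotp v u ≠ 0) (hw : dotp w u ≠ 0) :
    HasDerivAt (slideFam a b c v w u) (-(Qf a b c v w) / (dotp v u * dotp w u)) 0 := by
  -- Notation
  set L : ℝ := elen (c - b) with hLdef
  have hS0 : (0:ℝ) ≤ (c.1 - b.1) ^ 2 + (c.2 - b.2) ^ 2 := by positivity
  have hL2 : L ^ 2 = (c.1 - b.1) ^ 2 + (c.2 - b.2) ^ 2 := by
    rw [hLdef]; simpa [elen] using Real.sq_sqrt hS0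
  have hSpos : 0 < (c.1 - b.1) ^ 2 + (c.2 - b.2) ^ 2 := by
    rcases hS0.lt_or_eq with h | h
    · exact h
    · exfalso
      apply hbc
      have h1 : c.1 - b.1 = 0 := by nlinarith [sq_nonneg (c.1 - b.1), sq_nonneg (c.2 - b.2)]
      have h2 : c.2 - b.2 = 0 := by nlinarith [sq_nonneg (c.1 - b.1), sq_nonneg (c.2 - b.2)]
      exact Prod.ext (by linarith) (by linarith)
  have hLpos : 0 < L := by
    rw [hLdef]
    exact Real.sqrt_pos.2 hSpos
  have hLne : L ≠ 0 := ne_of_gt hLpos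
  -- components of u
  have hperp : u.1 * (c.1 - b.1) + u.2 * (c.2 - b.2) = 0 := by
    simpa [dotp] using huperp
  have hun2 : (u.1 * (c.2 - b.2) + u.2 * (b.1 - c.1)) ^ 2 = L ^ 2 := by
    rw [hL2]; nlinarith [hperp, hu1]
  have hcases : u.1 * (c.2 - b.2) + u.2 * (b.1 - c.1) = L ∨
      u.1 * (c.2 - b.2) + u.2 * (b.1 - c.1) = -L := sq_eq_sq_iff_eq_or_eq_neg.mp hun2 |>.imp id id
  have haway : u.1 * (a.1 - b.1) + u.2 * (a.2 - b.2) < 0 := by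
    simpa [dotp] using huaway
  have hwedge : 0 < (b.1 - a.1) * (c.2 - a.2) - (b.2 - a.2) * (c.1 - a.1) := by
    simpa [wedge] using hccw
  have hu1c : u.1 * L = c.2 - b.2 ∧ u.2 * L = b.1 - c.1 := by
    rcases hcases with h | h
    · have hz : (u.1 * L - (c.2 - b.2)) ^ 2 + (u.2 * L - (b.1 - c.1)) ^ 2 = 0 := by
        have expand : (u.1 * L - (c.2 - b.2)) ^ 2 + (u.2 * L - (b.1 - c.1)) ^ 2
            = L ^ 2 * (u.1 ^ 2 + u.2 ^ 2)
              - 2 * L * (u.1 * (c.2 - b.2) + u.2 * (b.1 - c.1))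
              + ((c.1 - b.1) ^ 2 + (c.2 - b.2) ^ 2) := by ring
        rw [expand, hu1, h, ← hL2]; ring
      have e1 : (u.1 * L - (c.2 - b.2)) ^ 2 = 0 :=
        le_antisymm (by linarith [sq_nonneg (u.2 * L - (b.1 - c.1))]) (sq_nonneg _)
      have e2 : (u.2 * L - (b.1 - c.1)) ^ 2 = 0 :=
        le_antisymm (by linarith [sq_nonneg (u.1 * L - (c.2 - b.2))]) (sq_nonneg _)
      have e1' := pow_eq_zero_iff (two_ne_zero) |>.mp e1
      have e2' := pow_eq_zero_iff (two_ne_zero) |>.mp e2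
      exact ⟨by linarith, by linarith⟩
    · exfalso
      have hz : (u.1 * L + (c.2 - b.2)) ^ 2 + (u.2 * L + (b.1 - c.1)) ^ 2 = 0 := by
        have expand : (u.1 * L + (c.2 - b.2)) ^ 2 + (u.2 * L + (b.1 - c.1)) ^ 2
            = L ^ 2 * (u.1 ^ 2 + u.2 ^ 2)
              + 2 * L * (u.1 * (c.2 - b.2) + u.2 * (b.1 - c.1))
              + ((c.1 - b.1) ^ 2 + (c.2 - b.2) ^ 2) := by ring
        rw [expand, hu1, h, ← hL2]; ring
      have e1 : (u.1 * L + (c.2 - b.2)) ^ 2 = 0 :=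
        le_antisymm (by linarith [sq_nonneg (u.2 * L + (b.1 - c.1))]) (sq_nonneg _)
      have e2 : (u.2 * L + (b.1 - c.1)) ^ 2 = 0 :=
        le_antisymm (by linarith [sq_nonneg (u.1 * L + (c.2 - b.2))]) (sq_nonneg _)
      have e1' := pow_eq_zero_iff (two_ne_zero) |>.mp e1
      have e2' := pow_eq_zero_iff (two_ne_zero) |>.mp e2
      have hkey : L * (u.1 * (a.1 - b.1) + u.2 * (a.2 - b.2))
          = (b.1 - a.1) * (c.2 - a.2) - (b.2 - a.2) * (c.1 - a.1) := by
        linear_combination (a.1 - b.1) * e1' + (a.2 - b.2) * e2'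
      have hneg : L * (u.1 * (a.1 - b.1) + u.2 * (a.2 - b.2)) < 0 :=
        mul_neg_of_pos_of_neg hLpos haway
      linarith
  obtain ⟨hu1e, hu2e⟩ := hu1c
  -- dot products with the (unnormalized) normal
  have hP : L * dotp v u = v.1 * (c.2 - b.2) + v.2 * (b.1 - c.1) := by
    simp only [dotp]; linear_combination v.1 * hu1e + v.2 * hu2e
  have hQ : L * dotp w u = w.1 * (c.2 - b.2) + w.2 * (b.1 - c.1) := by
    simp only [dotp]; linear_combination w.1 * hu1e + w.2 * hu2e
  set kv : ℝ := L / dotp v u with hkv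
  set kw : ℝ := L / dotp w u with hkw
  -- rewrite slideFam as an explicit quadratic
  have hfun : slideFam a b c v w u = fun h : ℝ =>
      (kv * kw * wedge v w) * h ^ 2
      + (kw * wedge (b - a) w + kv * wedge v (c - a)) * h
      + wedge (b - a) (c - a) := by
    funext h
    simp only [slideFam, wedge, hkv, hkw, Prod.fst_add, Prod.snd_add, Prod.fst_sub,
      Prod.snd_sub, Prod.smul_fst, Prod.smul_snd, smul_eq_mul]
    field_simp
    ring
  rw [hfun]
  have hD : HasDerivAt (fun h : ℝ =>
      (kv * kw * wedge v w) * h ^ 2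
      + (kw * wedge (b - a) w + kv * wedge v (c - a)) * h
      + wedge (b - a) (c - a))
      ((kv * kw * wedge v w) * (2 * 0) + (kw * wedge (b - a) w + kv * wedge v (c - a))) 0 := by
    have h1 : HasDerivAt (fun h : ℝ => h ^ 2) (2 * (0:ℝ)) 0 := by
      simpa using hasDerivAt_pow 2 (0:ℝ)
    have h2 : HasDerivAt (fun h : ℝ => (kv * kw * wedge v w) * h ^ 2)
        ((kv * kw * wedge v w) * (2 * 0)) 0 := h1.const_mul _
    have h3 : HasDerivAt (fun h : ℝ => (kw * wedge (b - a) w + kv * wedge v (c - a)) * h)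
        (kw * wedge (b - a) w + kv * wedge v (c - a)) 0 := by
      simpa using (hasDerivAt_id (0:ℝ)).const_mul (kw * wedge (b - a) w + kv * wedge v (c - a))
    exact (h2.add h3).add_const _
  convert hD using 1
  -- identify the derivative value
  have hveq : dotp v u = (v.1 * (c.2 - b.2) + v.2 * (b.1 - c.1)) / L := by
    field_simp [hLne] at hP ⊢; linarith [hP]
  have hweq : dotp w u = (w.1 * (c.2 - b.2) + w.2 * (b.1 - c.1)) / L := by
    field_simp [hLne] at hQ ⊢; linarith [hQ]
  have hPne : v.1 * (c.2 - b.2) + v.2 * (b.1 - c.1) ≠ 0 := by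
    intro h0
    apply hv
    rw [hveq, h0, zero_div]
  have hQne : w.1 * (c.2 - b.2) + w.2 * (b.1 - c.1) ≠ 0 := by
    intro h0
    apply hw
    rw [hweq, h0, zero_div]
  rw [hkv, hkw, hveq, hweq]
  simp only [Qf, wedge, Prod.fst_sub, Prod.snd_sub]
  have hLL : L * L = (c.1 - b.1) ^ 2 + (c.2 - b.2) ^ 2 := by rw [← hL2]; ring
  have hr1 : L / ((v.1 * (c.2 - b.2) + v.2 * (b.1 - c.1)) / L)
      = ((c.1 - b.1) ^ 2 + (c.2 - b.2) ^ 2) / (v.1 * (c.2 - b.2) + v.2 * (b.1 - c.1)) := by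
    rw [div_div_eq_mul_div, hLL]
  have hr2 : L / ((w.1 * (c.2 - b.2) + w.2 * (b.1 - c.1)) / L)
      = ((c.1 - b.1) ^ 2 + (c.2 - b.2) ^ 2) / (w.1 * (c.2 - b.2) + w.2 * (b.1 - c.1)) := by
    rw [div_div_eq_mul_div, hLL]
  have hr3 : (v.1 * (c.2 - b.2) + v.2 * (b.1 - c.1)) / L * ((w.1 * (c.2 - b.2) + w.2 * (b.1 - c.1)) / L)
      = (v.1 * (c.2 - b.2) + v.2 * (b.1 - c.1)) * (w.1 * (c.2 - b.2) + w.2 * (b.1 - c.1))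
        / ((c.1 - b.1) ^ 2 + (c.2 - b.2) ^ 2) := by
    rw [div_mul_div_comm, hLL]
  rw [hr1, hr2, hr3]
  have hPne' : (c.2 - b.2) * v.1 + v.2 * (b.1 - c.1) ≠ 0 := by
    intro h0; apply hPne; linarith
  have hQne' : (c.2 - b.2) * w.1 + w.2 * (b.1 - c.1) ≠ 0 := by
    intro h0; apply hQne; linarith
  rw [mul_zero, mul_zero, zero_add]
  field_simp [hPne, hQne, hSpos.ne']
  ring
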